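/- arXiv:2308.14987 — 4 statements merged into one kernel-verified Lean document; each statement's English description precedes it below -/
import Mathlib

section
/- Under the hypotheses of the main construction — G a subgroup of Apar(Q), e = (e₁,e₂,e₃) an entry, Θ = (f₁,f₂,f₃;π) ∈ Stab_G^row(e) \ Stab_G^col(e) — the modified triple e' = (e₁, e₂, f_{π(3)}(e_{π(3)})) satisfies f_{π(3)}(e_{π(3)}) ≠ e₃, and consequently the orbit of e under G is disjoint from the set {Θ'(e') : Θ' ∈ G}. -/
/-- A quasigroup operation: all left and right translations are bijective. -/
def IsQuasigroup {Q : Type*} (op : Q → Q → Q) : Prop :=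
  (∀ x, Function.Bijective (op x)) ∧ (∀ y, Function.Bijective fun x => op x y)

/-- The entry set of the Cayley table of `op`, as triples `(x, y, x*y)`. -/
def Ent {Q : Type*} (op : Q → Q → Q) : Set (Fin 3 → Q) :=
  {t | op (t 0) (t 1) = t 2}

/-- The permutation of triples induced by a paratopism datum `(f; π)`:
`t ↦ (i ↦ f (π i) (t (π i)))`. -/
def paraAct {Q : Type*} (f : Fin 3 → Equiv.Perm Q) (π : Equiv.Perm (Fin 3)) :
    Equiv.Perm (Fin 3 → Q) where
  toFun t i := f (π i) (t (π i))
  invFun t i := (f i).symm (t (π.symm i))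
  left_inv t := by funext i; simp
  right_inv t := by funext i; simp

/-- A permutation of triples is paratopic when it is induced by some `(f; π)`. -/
def IsParatopic {Q : Type*} (σ : Equiv.Perm (Fin 3 → Q)) : Prop :=
  ∃ (f : Fin 3 → Equiv.Perm Q) (π : Equiv.Perm (Fin 3)), σ = paraAct f π

/-- A permutation of triples preserves the entries of the Cayley table of `op`. -/
def PreservesEnt {Q : Type*} (op : Q → Q → Q) (σ : Equiv.Perm (Fin 3 → Q)) : Prop :=
  ∀ t ∈ Ent op, σ t ∈ Ent op

/-- if `Θ = paraAct f π ∈ G` stabilizes the row of the entry `e` but not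
its column, then the modified triple `e' = (e 0, e 1, f (π 2) (e (π 2)))` has third
coordinate different from `e 2`, and the `G`-orbit of `e` is disjoint from the set
`{Θ'(e') : Θ' ∈ G}`. -/
theorem modified_triple_orbit_disjoint {Q : Type*} (op : Q → Q → Q)
    (hQ : IsQuasigroup op) (G : Subgroup (Equiv.Perm (Fin 3 → Q)))
    (hG : ∀ σ ∈ G, IsParatopic σ ∧ PreservesEnt op σ)
    (e : Fin 3 → Q) (he : e ∈ Ent op)
    (f : Fin 3 → Equiv.Perm Q) (π : Equiv.Perm (Fin 3))
    (hΘG : paraAct f π ∈ G)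
    (hrow : paraAct f π e 0 = e 0)
    (hcol : paraAct f π e 1 ≠ e 1) :
    f (π 2) (e (π 2)) ≠ e 2 ∧
    ((fun σ : Equiv.Perm (Fin 3 → Q) => σ e) '' G) ∩
      ((fun σ : Equiv.Perm (Fin 3 → Q) => σ (Function.update e 2 (f (π 2) (e (π 2))))) '' G)
      = ∅ := by
  have hΘe : paraAct f π e ∈ Ent op := (hG _ hΘG).2 e he
  have hrow' : f (π 0) (e (π 0)) = e 0 := hrow
  have hcol' : f (π 1) (e (π 1)) ≠ e 1 := hcol
  have hne : f (π 2) (e (π 2)) ≠ e 2 := by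
    intro h
    apply hcol'
    have h1 : op (e 0) (f (π 1) (e (π 1))) = e 2 := by
      have := hΘe
      simp only [Ent, paraAct, Equiv.coe_fn_mk, Set.mem_setOf_eq] at this
      rw [hrow', h] at this
      exact this
    have h2 : op (e 0) (e 1) = e 2 := he
    exact (hQ.1 (e 0)).1 (h1.trans h2.symm)
  refine ⟨hne, ?_⟩
  set e' := Function.update e 2 (f (π 2) (e (π 2))) with he'
  have he'not : e' ∉ Ent op := by
    intro h
    apply hne
    have h0 : e' 0 = e 0 := Function.update_of_ne (by decide) _ _
    have h1 : e' 1 = e 1 := Function.update_of_ne (by decide) _ _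
    have h2 : e' 2 = f (π 2) (e (π 2)) := Function.update_self _ _ _
    have : op (e' 0) (e' 1) = e' 2 := h
    rw [h0, h1, h2, he] at this
    exact this.symm
  ext x
  simp only [Set.mem_inter_iff, Set.mem_image, Set.mem_empty_iff_false, iff_false, not_and]
  rintro ⟨σ, hσ, rfl⟩ ⟨σ', hσ', hx⟩
  have h1 : σ e ∈ Ent op := (hG σ hσ).2 e he
  apply he'not
  have : (σ'⁻¹ : Equiv.Perm (Fin 3 → Q)) (σ' e') ∈ Ent op := by
    rw [hx]
    exact (hG _ (inv_mem hσ')).2 _ h1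
  simpa using this
end

section
/- Let G be a finite group with identity 1 and a,b,c ∈ G \ {1} with abc = 1 and ⟨a⟩ ∩ ⟨b⟩ = ⟨a⟩ ∩ ⟨c⟩ = ⟨b⟩ ∩ ⟨c⟩ = {1}. Let A = ⟨a⟩, B = ⟨b⟩, C = ⟨c⟩. Then the map g ↦ (gA, gB, gC) induces a partial Latin square T° = {(gA,gB,gC) : g ∈ G} of size |G|: distinct elements g, g' yield triples agreeing in at most one coordinate, and T° has |G:A| nonempty rows each with |A| entries, |G:B| nonempty columns each with |B| entries, and |G:C| symbols each occurring |C| times. -/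
private lemma fiber_ncard {G : Type*} [Group G] [Finite G] (H : Subgroup G) (r : G ⧸ H) :
    Set.ncard {g : G | (QuotientGroup.mk g : G ⧸ H) = r} = Nat.card H := by
  obtain ⟨g0, rfl⟩ := QuotientGroup.mk_surjective r
  have hset : {g : G | (QuotientGroup.mk g : G ⧸ H) = QuotientGroup.mk g0}
      = (fun x => g0 * x) '' (H : Set G) := by
    ext g
    simp only [Set.mem_setOf_eq, Set.mem_image, SetLike.mem_coe, QuotientGroup.eq]
    constructor
    · intro h
      exact ⟨g0⁻¹ * g, by simpa using (inv_mem h : (g⁻¹ * g0)⁻¹ ∈ H), by group⟩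
    · rintro ⟨x, hx, rfl⟩
      simpa using (inv_mem hx : x⁻¹ ∈ H)
  rw [hset, Set.ncard_image_of_injective _ (mul_right_injective g0)]
  rw [← Nat.card_coe_set_eq]
  rfl

private lemma rows_univ {G α : Type*} [Group G] (H : Subgroup G)
    (f : G → α) (p : α → G ⧸ H) (hpf : ∀ g, p (f g) = QuotientGroup.mk g) :
    {r | ∃ t ∈ Set.range f, p t = r} = Set.univ := by
  ext r
  simp only [Set.mem_setOf_eq, Set.mem_univ, iff_true]
  obtain ⟨g, rfl⟩ := QuotientGroup.mk_surjective r
  exact ⟨f g, ⟨g, rfl⟩, hpf g⟩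

private lemma key {G α : Type*} [Group G] [Finite G] (H : Subgroup G)
    (f : G → α) (hf : Function.Injective f) (p : α → G ⧸ H)
    (hpf : ∀ g, p (f g) = QuotientGroup.mk g) (r : G ⧸ H) :
    Set.ncard {t ∈ Set.range f | p t = r} = Nat.card H := by
  have hset : {t ∈ Set.range f | p t = r}
      = f '' {g : G | (QuotientGroup.mk g : G ⧸ H) = r} := by
    ext t
    constructor
    · rintro ⟨⟨g, rfl⟩, h2⟩
      exact ⟨g, show (QuotientGroup.mk g : G ⧸ H) = r by rw [← hpf g]; exact h2, rfl⟩
    · rintro ⟨g, hg, rfl⟩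
      exact ⟨⟨g, rfl⟩, by rw [hpf g]; exact hg⟩
  rw [hset, Set.ncard_image_of_injective _ hf, fiber_ncard]

/-- if `abc = 1` and the cyclic subgroups `A = ⟨a⟩`, `B = ⟨b⟩`, `C = ⟨c⟩`
intersect pairwise trivially, then `T° = {(gA, gB, gC) : g ∈ G}` is a partial Latin
square of size `|G|`, with `|G:A|` nonempty rows each containing `|A|` entries, `|G:B|`
nonempty columns each containing `|B|` entries, and `|G:C|` symbols each occurring `|C|`
times. -/
theorem coset_triples_partial_latin_square {G : Type*} [Group G] [Finite G]
    (a b c : G) (ha : a ≠ 1) (hb : b ≠ 1) (hc : c ≠ 1) (habc : a * b * c = 1)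
    (hAB : Subgroup.zpowers a ⊓ Subgroup.zpowers b = ⊥)
    (hAC : Subgroup.zpowers a ⊓ Subgroup.zpowers c = ⊥)
    (hBC : Subgroup.zpowers b ⊓ Subgroup.zpowers c = ⊥)
    (T : Set ((G ⧸ Subgroup.zpowers a) × (G ⧸ Subgroup.zpowers b) × (G ⧸ Subgroup.zpowers c)))
    (hT : T = Set.range fun g : G =>
      ((QuotientGroup.mk g : G ⧸ Subgroup.zpowers a),
       (QuotientGroup.mk g : G ⧸ Subgroup.zpowers b),
       (QuotientGroup.mk g : G ⧸ Subgroup.zpowers c))) :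
    T.ncard = Nat.card G ∧
    (∀ g g' : G, g ≠ g' →
      ¬((QuotientGroup.mk g : G ⧸ Subgroup.zpowers a) = QuotientGroup.mk g' ∧
        (QuotientGroup.mk g : G ⧸ Subgroup.zpowers b) = QuotientGroup.mk g') ∧
      ¬((QuotientGroup.mk g : G ⧸ Subgroup.zpowers a) = QuotientGroup.mk g' ∧
        (QuotientGroup.mk g : G ⧸ Subgroup.zpowers c) = QuotientGroup.mk g') ∧
      ¬((QuotientGroup.mk g : G ⧸ Subgroup.zpowers b) = QuotientGroup.mk g' ∧
        (QuotientGroup.mk g : G ⧸ Subgroup.zpowers c) = QuotientGroup.mk g')) ∧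
    Set.ncard {r | ∃ t ∈ T, t.1 = r} = (Subgroup.zpowers a).index ∧
    (∀ r, (∃ t ∈ T, t.1 = r) →
      Set.ncard {t ∈ T | t.1 = r} = Nat.card (Subgroup.zpowers a)) ∧
    Set.ncard {col | ∃ t ∈ T, t.2.1 = col} = (Subgroup.zpowers b).index ∧
    (∀ col, (∃ t ∈ T, t.2.1 = col) →
      Set.ncard {t ∈ T | t.2.1 = col} = Nat.card (Subgroup.zpowers b)) ∧
    Set.ncard {s | ∃ t ∈ T, t.2.2 = s} = (Subgroup.zpowers c).index ∧
    (∀ s, (∃ t ∈ T, t.2.2 = s) →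
      Set.ncard {t ∈ T | t.2.2 = s} = Nat.card (Subgroup.zpowers c)) := by
  subst hT
  set A := Subgroup.zpowers a
  set B := Subgroup.zpowers b
  set C := Subgroup.zpowers c
  set f : G → (G ⧸ A) × (G ⧸ B) × (G ⧸ C) := fun g =>
    ((QuotientGroup.mk g : G ⧸ A), (QuotientGroup.mk g : G ⧸ B),
     (QuotientGroup.mk g : G ⧸ C)) with hf
  -- key coincidence lemma: agreement in two coordinates forces equality
  have pair : ∀ (H K : Subgroup G), H ⊓ K = ⊥ → ∀ g g' : G,
      (QuotientGroup.mk g : G ⧸ H) = QuotientGroup.mk g' →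
      (QuotientGroup.mk g : G ⧸ K) = QuotientGroup.mk g' → g = g' := by
    intro H K hHK g g' h1 h2
    rw [QuotientGroup.eq] at h1 h2
    have : g⁻¹ * g' ∈ H ⊓ K := ⟨h1, h2⟩
    rw [hHK, Subgroup.mem_bot] at this
    have := inv_mul_eq_one.mp this
    exact this
  have hinj : Function.Injective f := by
    intro g g' h
    simp only [hf, Prod.mk.injEq] at h
    exact pair A B hAB g g' h.1 h.2.1
  refine ⟨?_, ?_, ?_, ?_, ?_, ?_, ?_, ?_⟩
  · rw [← Set.image_univ, Set.ncard_image_of_injective _ hinj, Set.ncard_univ]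
  · intro g g' hgg'
    exact ⟨fun ⟨h1, h2⟩ => hgg' (pair A B hAB g g' h1 h2),
           fun ⟨h1, h2⟩ => hgg' (pair A C hAC g g' h1 h2),
           fun ⟨h1, h2⟩ => hgg' (pair B C hBC g g' h1 h2)⟩
  · rw [rows_univ A f (fun t => t.1) (fun g => rfl), Set.ncard_univ]
    rfl
  · intro r _; exact key A f hinj (fun t => t.1) (fun g => rfl) r
  · rw [rows_univ B f (fun t => t.2.1) (fun g => rfl), Set.ncard_univ]
    rfl
  · intro r _; exact key B f hinj (fun t => t.2.1) (fun g => rfl) r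
  · rw [rows_univ C f (fun t => t.2.2) (fun g => rfl), Set.ncard_univ]
    rfl
  · intro r _; exact key C f hinj (fun t => t.2.2) (fun g => rfl) r
end

section
/- Under the hypotheses abc = 1 and pairwise trivial intersections of ⟨a⟩, ⟨b⟩, ⟨c⟩ in a finite group G, the pair T° = {(gA,gB,gC) : g ∈ G} and T* = {(gA,gB,ga⁻¹C) : g ∈ G} is a Latin bitrade: they are disjoint, of equal size |G|, and for each row gA (respectively column gB) the set of symbols occupied by T° equals that occupied by T*. -/
/-- under `abc = 1` and pairwise trivial intersections of `⟨a⟩, ⟨b⟩, ⟨c⟩`,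
the pair `T° = {(gA,gB,gC)}` and `T* = {(gA,gB,ga⁻¹C)}` is a Latin bitrade: disjoint,
of equal size `|G|`, and each row (respectively column) contains the same set of symbols
in `T°` and in `T*`. -/
theorem coset_triples_bitrade {G : Type*} [Group G] [Finite G]
    (a b c : G) (ha : a ≠ 1) (hb : b ≠ 1) (hc : c ≠ 1) (habc : a * b * c = 1)
    (hAB : Subgroup.zpowers a ⊓ Subgroup.zpowers b = ⊥)
    (hAC : Subgroup.zpowers a ⊓ Subgroup.zpowers c = ⊥)
    (hBC : Subgroup.zpowers b ⊓ Subgroup.zpowers c = ⊥)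
    (T Tstar : Set ((G ⧸ Subgroup.zpowers a) × (G ⧸ Subgroup.zpowers b) ×
      (G ⧸ Subgroup.zpowers c)))
    (hT : T = Set.range fun g : G =>
      ((QuotientGroup.mk g : G ⧸ Subgroup.zpowers a),
       (QuotientGroup.mk g : G ⧸ Subgroup.zpowers b),
       (QuotientGroup.mk g : G ⧸ Subgroup.zpowers c)))
    (hTstar : Tstar = Set.range fun g : G =>
      ((QuotientGroup.mk g : G ⧸ Subgroup.zpowers a),
       (QuotientGroup.mk g : G ⧸ Subgroup.zpowers b),
       (QuotientGroup.mk (g * a⁻¹) : G ⧸ Subgroup.zpowers c))) :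
    T ∩ Tstar = ∅ ∧
    T.ncard = Nat.card G ∧
    Tstar.ncard = Nat.card G ∧
    (∀ r : G ⧸ Subgroup.zpowers a,
      {s | ∃ t ∈ T, t.1 = r ∧ t.2.2 = s} = {s | ∃ t ∈ Tstar, t.1 = r ∧ t.2.2 = s}) ∧
    (∀ col : G ⧸ Subgroup.zpowers b,
      {s | ∃ t ∈ T, t.2.1 = col ∧ t.2.2 = s} =
        {s | ∃ t ∈ Tstar, t.2.1 = col ∧ t.2.2 = s}) := by

  have hinj : ∀ g h : G, (QuotientGroup.mk g : G ⧸ Subgroup.zpowers a) = QuotientGroup.mk h →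
      (QuotientGroup.mk g : G ⧸ Subgroup.zpowers b) = QuotientGroup.mk h → g = h := by
    intro g h h1 h2
    rw [QuotientGroup.eq] at h1 h2
    have : g⁻¹ * h ∈ Subgroup.zpowers a ⊓ Subgroup.zpowers b := ⟨h1, h2⟩
    rw [hAB, Subgroup.mem_bot] at this
    exact inv_mul_eq_one.mp this
  have hab : a * b = c⁻¹ := eq_inv_of_mul_eq_one_left habc
  have habC : a * b ∈ Subgroup.zpowers c := hab ▸ Subgroup.inv_mem _ (Subgroup.mem_zpowers c)
  refine ⟨?_, ?_, ?_, ?_, ?_⟩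
  · ext t
    simp only [Set.mem_inter_iff, Set.mem_empty_iff_false, iff_false]
    rintro ⟨ht1, ht2⟩
    rw [hT] at ht1; rw [hTstar] at ht2
    obtain ⟨g, hg⟩ := ht1
    obtain ⟨h, hh⟩ := ht2
    rw [← hh, Prod.ext_iff, Prod.ext_iff] at hg
    obtain ⟨e1, e2, e3⟩ := hg
    have hgh : g = h := hinj g h e1 e2
    subst hgh
    rw [QuotientGroup.eq] at e3
    have : a⁻¹ ∈ Subgroup.zpowers a ⊓ Subgroup.zpowers c :=
      ⟨Subgroup.inv_mem _ (Subgroup.mem_zpowers a), by simpa using e3⟩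
    rw [hAC, Subgroup.mem_bot, inv_eq_one] at this
    exact ha this
  · rw [hT, ← Nat.card_coe_set_eq]
    exact Nat.card_range_of_injective fun g h hgh => by
      simp only [Prod.mk.injEq] at hgh; exact hinj g h hgh.1 hgh.2.1
  · rw [hTstar, ← Nat.card_coe_set_eq]
    exact Nat.card_range_of_injective fun g h hgh => by
      simp only [Prod.mk.injEq] at hgh; exact hinj g h hgh.1 hgh.2.1
  · intro r
    ext s
    simp only [hT, hTstar, Set.mem_setOf_eq, Set.mem_range]
    constructor
    · rintro ⟨t, ⟨g, rfl⟩, h1, h2⟩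
      refine ⟨_, ⟨g * a, rfl⟩, ?_, ?_⟩
      · simpa [QuotientGroup.mk_mul_of_mem g (Subgroup.mem_zpowers a)] using h1
      · simpa [mul_inv_cancel_right] using h2
    · rintro ⟨t, ⟨g, rfl⟩, h1, h2⟩
      refine ⟨_, ⟨g * a⁻¹, rfl⟩, ?_, ?_⟩
      · simpa [QuotientGroup.mk_mul_of_mem g
          (Subgroup.inv_mem _ (Subgroup.mem_zpowers a))] using h1
      · simpa using h2
  · intro col
    ext s
    simp only [hT, hTstar, Set.mem_setOf_eq, Set.mem_range]
    constructor
    · rintro ⟨t, ⟨g, rfl⟩, h1, h2⟩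
      refine ⟨_, ⟨g * b⁻¹, rfl⟩, ?_, ?_⟩
      · simpa [QuotientGroup.mk_mul_of_mem g
          (Subgroup.inv_mem _ (Subgroup.mem_zpowers b))] using h1
      · have : (QuotientGroup.mk (g * b⁻¹ * a⁻¹) : G ⧸ Subgroup.zpowers c)
            = QuotientGroup.mk g := by
          rw [QuotientGroup.eq]
          convert habC using 1
          group
        simpa [this] using h2
    · rintro ⟨t, ⟨g, rfl⟩, h1, h2⟩
      refine ⟨_, ⟨g * b, rfl⟩, ?_, ?_⟩
      · simpa [QuotientGroup.mk_mul_of_mem g (Subgroup.mem_zpowers b)] using h1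
      · have : (QuotientGroup.mk (g * b) : G ⧸ Subgroup.zpowers c)
            = QuotientGroup.mk (g * a⁻¹) := by
          rw [QuotientGroup.eq]
          have hc2 : c = (a * b)⁻¹ := by rw [hab, inv_inv]
          have : (g * b)⁻¹ * (g * a⁻¹) = c := by rw [hc2]; group
          rw [this]; exact Subgroup.mem_zpowers c
        simpa [this] using h2
end

section
/- Let θ be the quadratic orthomorphism of F_q determined by distinct constants a, b (with ab and (a−1)(b−1) nonzero squares). Then the maps α(x) = (b/a)·x and ᾱ(x) = ((b−1)/(a−1))·(x−1) + 1 are automorphisms of the Latin square L(θ); moreover α fixes the row 0 of the entry e = (0,1,a) (i.e., α(0) = 0) but not its column (α(1) = b/a ≠ 1), and ᾱ fixes its column (ᾱ(1) = 1). -/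
/-- for the quadratic orthomorphism `θ` of a finite field determined by
distinct constants `a ≠ b` (with `ab` and `(a−1)(b−1)` nonzero squares), the maps
`α(x) = (b/a)·x` and `ᾱ(x) = ((b−1)/(a−1))·(x−1) + 1` are automorphisms of the Latin
square `L(θ)` with entries `(i, j, θ(j−i)+i)`; moreover `α(0) = 0`, `α(1) = b/a ≠ 1`,
and `ᾱ(1) = 1`. -/
theorem quadratic_orthomorphism_automorphisms {F : Type*} [Field F] [Fintype F]
    (a b : F) (hab : a ≠ b)
    (hs1 : IsSquare (a * b)) (hs1' : a * b ≠ 0)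
    (hs2 : IsSquare ((a - 1) * (b - 1))) (hs2' : (a - 1) * (b - 1) ≠ 0)
    (θ : F → F) (hθ0 : θ 0 = 0)
    (hθsq : ∀ x : F, x ≠ 0 → IsSquare x → θ x = a * x)
    (hθns : ∀ x : F, x ≠ 0 → ¬IsSquare x → θ x = b * x)
    (α αbar : F → F)
    (hα : ∀ x, α x = (b / a) * x)
    (hαbar : ∀ x, αbar x = ((b - 1) / (a - 1)) * (x - 1) + 1) :
    Function.Bijective α ∧
    Function.Bijective αbar ∧
    (∀ i j s : F, s = θ (j - i) + i → α s = θ (α j - α i) + α i) ∧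
    (∀ i j s : F, s = θ (j - i) + i → αbar s = θ (αbar j - αbar i) + αbar i) ∧
    α 0 = 0 ∧ α 1 = b / a ∧ b / a ≠ 1 ∧ αbar 1 = 1 := by
  have ha : a ≠ 0 := fun h => hs1' (by rw [h, zero_mul])
  have hb : b ≠ 0 := fun h => hs1' (by rw [h, mul_zero])
  have ha1 : a - 1 ≠ 0 := fun h => hs2' (by rw [h, zero_mul])
  have hb1 : b - 1 ≠ 0 := fun h => hs2' (by rw [h, mul_zero])
  have hc1 : b / a ≠ 0 := div_ne_zero hb ha
  have hc2 : (b - 1) / (a - 1) ≠ 0 := div_ne_zero hb1 ha1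
  have hcsq1 : IsSquare (b / a) := by
    obtain ⟨r, hr⟩ := hs1
    exact ⟨r / a, by field_simp; linear_combination hr⟩
  have hcsq2 : IsSquare ((b - 1) / (a - 1)) := by
    obtain ⟨r, hr⟩ := hs2
    exact ⟨r / (a - 1), by field_simp; linear_combination hr⟩
  -- key: θ commutes with multiplication by a nonzero square
  have key : ∀ c : F, c ≠ 0 → IsSquare c → ∀ x, θ (c * x) = c * θ x := by
    intro c hc hcs x
    by_cases hx : x = 0
    · simp [hx, hθ0]
    by_cases hxs : IsSquare x
    · rw [hθsq _ (mul_ne_zero hc hx) (hcs.mul hxs), hθsq x hx hxs]; ring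
    · have hcx : ¬IsSquare (c * x) := fun h => hxs (by
        have : IsSquare (c⁻¹ * (c * x)) := (hcs.inv).mul h
        rwa [inv_mul_cancel_left₀ hc] at this)
      rw [hθns _ (mul_ne_zero hc hx) hcx, hθns x hx hxs]; ring
  refine ⟨?_, ?_, ?_, ?_, by rw [hα]; ring, by rw [hα]; ring, ?_, by rw [hαbar]; ring⟩
  · constructor
    · intro x y h
      rw [hα, hα] at h
      exact mul_left_cancel₀ hc1 h
    · intro y
      refine ⟨y / (b / a), ?_⟩
      rw [hα]; field_simp
  · constructor
    · intro x y h
      rw [hαbar, hαbar] at h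
      have h2 : (b - 1) / (a - 1) * (x - 1) = (b - 1) / (a - 1) * (y - 1) := by
        linear_combination h
      have h3 := mul_left_cancel₀ hc2 h2
      linear_combination h3
    · intro y
      refine ⟨(y - 1) / ((b - 1) / (a - 1)) + 1, ?_⟩
      rw [hαbar]; field_simp; ring
  · intro i j s hs
    subst hs
    rw [hα, hα, hα]
    have h1 : (b / a) * j - (b / a) * i = (b / a) * (j - i) := by ring
    rw [h1, key _ hc1 hcsq1]; ring
  · intro i j s hs
    subst hs
    rw [hαbar, hαbar, hαbar]
    have h1 : ((b - 1) / (a - 1)) * (j - 1) + 1 - (((b - 1) / (a - 1)) * (i - 1) + 1)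
        = ((b - 1) / (a - 1)) * (j - i) := by ring
    rw [h1, key _ hc2 hcsq2]; ring
  · intro h
    exact hab ((div_eq_one_iff_eq ha).mp h).symm
end
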